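/- arXiv:2507.09473 — 3 statements merged into one kernel-verified Lean document; each statement's English description precedes it below -/
import Mathlib

section
/- For any nonnegative reals x_1, ..., x_T, the sum ∑_{t=1}^T x_t / √(∑_{s=1}^t x_s) is at most 2·√(∑_{t=1}^T x_t), where terms with ∑_{s=1}^t x_s = 0 are interpreted as 0. -/
/-- For nonnegative reals `x 0, ..., x (T-1)`,
`∑_t x t / √(∑_{s ≤ t} x s) ≤ 2 √(∑_t x t)` (with the convention `0 / 0 = 0`,
which is Lean's division by zero). -/
theorem sum_div_sqrt_le (T : ℕ) (x : ℕ → ℝ) (hx : ∀ t, 0 ≤ x t) :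
    ∑ t ∈ Finset.range T, x t / Real.sqrt (∑ s ∈ Finset.range (t + 1), x s)
      ≤ 2 * Real.sqrt (∑ t ∈ Finset.range T, x t) := by
  induction T with
  | zero => simp
  | succ n ih =>
    rw [Finset.sum_range_succ, Finset.sum_range_succ (f := x)]
    set S := ∑ s ∈ Finset.range n, x s with hS
    have hS0 : 0 ≤ S := Finset.sum_nonneg fun i _ => hx i
    have hS'0 : 0 ≤ S + x n := add_nonneg hS0 (hx n)
    have hsum : ∑ s ∈ Finset.range (n + 1), x s = S + x n := Finset.sum_range_succ x n
    have key : x n / Real.sqrt (S + x n) ≤ 2 * Real.sqrt (S + x n) - 2 * Real.sqrt S := by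
      rcases eq_or_lt_of_le hS'0 with h | h
      · have h1 : x n = 0 := by nlinarith [hx n]
        have h2 : S = 0 := by linarith
        simp [h1, h2]
      · have hs : 0 < Real.sqrt (S + x n) := Real.sqrt_pos.2 h
        rw [div_le_iff₀ hs]
        have hmono : Real.sqrt S ≤ Real.sqrt (S + x n) :=
          Real.sqrt_le_sqrt (by linarith [hx n])
        nlinarith [Real.sq_sqrt hS0, Real.sq_sqrt hS'0, Real.sqrt_nonneg S]
    linarith
end

section
/- Let Ψ : 𝒳 → ℝ be a 1-strongly-convex function (w.r.t. a norm ‖·‖) with min_{x ∈ 𝒳} Ψ(x) = 0 on a convex set 𝒳, let f_1, ..., f_R : 𝒳 → ℝ be convex differentiable losses, and let η_1 ≥ η_2 ≥ ... ≥ η_R ≥ 0. Define x_r = argmin_{x ∈ 𝒳} (∑_{𝔯 < r} f_𝔯(x) + Ψ(x)/η_r). Then for every x* ∈ 𝒳, ∑_{r=1}^R (f_r(x_r) - f_r(x*)) ≤ Ψ(x*)/η_R + (1/2)·∑_{r=1}^R η_r·‖∇f_r(x_r)‖_*^2, where ‖·‖_* is the dual norm. -/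
open Finset

section Aux

variable {E : Type*} [NormedAddCommGroup E] [NormedSpace ℝ E]

/-- Subgradient inequality for a convex differentiable function. -/
lemma ftrl_subgrad {𝒳 : Set E} {f : E → ℝ} (hf : ConvexOn ℝ 𝒳 f) {x y : E}
    (hx : x ∈ 𝒳) (hy : y ∈ 𝒳) {g : E →L[ℝ] ℝ} (hg : HasFDerivAt f g x) :
    f x + g (y - x) ≤ f y := by
  have h1 : HasDerivAt (fun t : ℝ => x + t • (y - x)) (y - x) 0 := by
    simpa using ((hasDerivAt_id (0 : ℝ)).smul_const (y - x)).const_add x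
  have hg' : HasFDerivAt f g ((fun t : ℝ => x + t • (y - x)) 0) := by simpa using hg
  have hline : HasDerivAt (fun t : ℝ => f (x + t • (y - x))) (g (y - x)) 0 :=
    hg'.comp_hasDerivAt 0 h1
  have htend : Filter.Tendsto (slope (fun t : ℝ => f (x + t • (y - x))) 0)
      (nhdsWithin 0 (Set.Ioi 0)) (nhds (g (y - x))) :=
    (hasDerivAt_iff_tendsto_slope.mp hline).mono_left
      (nhdsWithin_mono 0 (fun t ht => ne_of_gt ht))
  have hev : ∀ᶠ t in nhdsWithin (0 : ℝ) (Set.Ioi 0),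
      slope (fun t : ℝ => f (x + t • (y - x))) 0 t ≤ f y - f x := by
    filter_upwards [Ioo_mem_nhdsGT (by norm_num : (0:ℝ) < 1)] with t ht
    have hpt : x + t • (y - x) = (1 - t) • x + t • y := by module
    have hcv := hf.2 hx hy (show (0:ℝ) ≤ 1 - t by linarith [ht.2]) ht.1.le (by ring)
    rw [← hpt] at hcv
    simp only [smul_eq_mul] at hcv
    rw [slope_def_field, div_le_iff₀ (by linarith [ht.1] : (0:ℝ) < t - 0)]
    simp only [zero_smul, add_zero] at *
    nlinarith [ht.1]
  linarith [le_of_tendsto htend hev]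

/-- A strongly convex function grows quadratically away from its minimizer. -/
lemma ftrl_strong_min {𝒳 : Set E} {m : ℝ} (hm : 0 ≤ m) {F : E → ℝ}
    (hF : StrongConvexOn 𝒳 m F) {x y : E} (hx : x ∈ 𝒳) (hy : y ∈ 𝒳)
    (hmin : ∀ z ∈ 𝒳, F x ≤ F z) :
    F x + m / 2 * ‖y - x‖ ^ 2 ≤ F y := by
  set c : ℝ := m / 2 * ‖y - x‖ ^ 2 with hc
  have hc0 : 0 ≤ c := by positivity
  have key : ∀ a ∈ Set.Ioo (0:ℝ) 1, F x + (1 - a) * c ≤ F y := by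
    intro a ha
    have hmem : (1 - a) • x + a • y ∈ 𝒳 := hF.1 hx hy (by linarith [ha.2]) ha.1.le (by ring)
    have h1 := hF.2 hx hy (show (0:ℝ) ≤ 1 - a by linarith [ha.2]) ha.1.le (by ring)
    rw [norm_sub_rev] at h1
    simp only [smul_eq_mul] at h1
    rw [← hc] at h1
    have h2 := hmin _ hmem
    nlinarith [ha.1, h1, h2, mul_pos ha.1 ha.1]
  have ht : Filter.Tendsto (fun a : ℝ => F x + (1 - a) * c)
      (nhdsWithin 0 (Set.Ioi 0)) (nhds (F x + (1 - 0) * c)) := by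
    apply Filter.Tendsto.mono_left _ nhdsWithin_le_nhds
    exact (by fun_prop : Continuous (fun a : ℝ => F x + (1 - a) * c)).tendsto 0
  simp only [sub_zero, one_mul] at ht
  refine le_of_tendsto ht ?_
  filter_upwards [Ioo_mem_nhdsGT (by norm_num : (0:ℝ) < 1)] with a ha
  exact key a ha

lemma ftrl_convexOn_sum {𝒳 : Set E} (h𝒳 : Convex ℝ 𝒳) {ι : Type*} (t : Finset ι)
    (f : ι → E → ℝ) (hf : ∀ i ∈ t, ConvexOn ℝ 𝒳 (f i)) :
    ConvexOn ℝ 𝒳 (fun y => ∑ i ∈ t, f i y) := by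
  refine ⟨h𝒳, fun x hx y hy a b ha hb hab => ?_⟩
  simp only [smul_eq_mul, Finset.mul_sum]
  rw [← Finset.sum_add_distrib]
  exact Finset.sum_le_sum fun i hi => by
    simpa using (hf i hi).2 hx hy ha hb hab

lemma ftrl_strongConvexOn_comb {𝒳 : Set E} {Ψ : E → ℝ} (hΨ : StrongConvexOn 𝒳 1 Ψ)
    {S : E → ℝ} (hS : ConvexOn ℝ 𝒳 S) {c : ℝ} (hc : 0 < c) :
    StrongConvexOn 𝒳 (1 / c) (fun y => S y + Ψ y / c) := by
  refine ⟨hΨ.1, fun x hx y hy a b ha hb hab => ?_⟩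
  have h1 := hΨ.2 hx hy ha hb hab
  have h2 := hS.2 hx hy ha hb hab
  simp only [smul_eq_mul] at h1 h2 ⊢
  have h3 : Ψ (a • x + b • y) / c ≤ (a * Ψ x + b * Ψ y - a * b * (1 / 2 * ‖x - y‖ ^ 2)) / c :=
    div_le_div_of_nonneg_right ?_ hc.le
  · have heq : (a * Ψ x + b * Ψ y - a * b * (1 / 2 * ‖x - y‖ ^ 2)) / c
        = a * (Ψ x / c) + b * (Ψ y / c) - a * b * (1 / c / 2 * ‖x - y‖ ^ 2) := by
      field_simp
    rw [heq] at h3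
    linarith
  · linarith [h1]

end Aux

/-- Follow-the-Regularized-Leader (FTRL) regret guarantee. -/
theorem ftrl_regret
    {E : Type*} [NormedAddCommGroup E] [NormedSpace ℝ E]
    (𝒳 : Set E) (h𝒳 : Convex ℝ 𝒳)
    (Ψ : E → ℝ) (hΨ : StrongConvexOn 𝒳 1 Ψ)
    (hΨ0 : ∀ y ∈ 𝒳, 0 ≤ Ψ y) (hΨmin : ∃ y ∈ 𝒳, Ψ y = 0)
    (R : ℕ) (hR : 0 < R)
    (f : Fin R → E → ℝ) (hf : ∀ r, ConvexOn ℝ 𝒳 (f r))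
    (f' : Fin R → E → (E →L[ℝ] ℝ))
    (hf' : ∀ r x, x ∈ 𝒳 → HasFDerivAt (f r) (f' r x) x)
    (η : Fin R → ℝ) (hηpos : ∀ r, 0 < η r)
    (hηmono : ∀ r r' : Fin R, r ≤ r' → η r' ≤ η r)
    (x : Fin R → E) (hx𝒳 : ∀ r, x r ∈ 𝒳)
    (hx : ∀ r, ∀ y ∈ 𝒳,
      (∑ s ∈ Finset.univ.filter (· < r), f s (x r)) + Ψ (x r) / η r
        ≤ (∑ s ∈ Finset.univ.filter (· < r), f s y) + Ψ y / η r) :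
    ∀ xstar ∈ 𝒳,
      ∑ r, (f r (x r) - f r xstar)
        ≤ Ψ xstar / η ⟨R - 1, by omega⟩
          + (1 / 2) * ∑ r, η r * ‖f' r (x r)‖ ^ 2 := by
  intro xstar hstar
  classical
  set S : Fin R → E → ℝ := fun r y => ∑ s ∈ Finset.univ.filter (· < r), f s y with hS
  -- key per-round inequality
  have key : ∀ (r : Fin R), ∀ z ∈ 𝒳,
      S r (x r) + Ψ (x r) / η r + f r (x r)
        ≤ S r z + Ψ z / η r + f r z + η r / 2 * ‖f' r (x r)‖ ^ 2 := by
    intro r z hz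
    have hSconv : ConvexOn ℝ 𝒳 (S r) :=
      ftrl_convexOn_sum h𝒳 _ _ (fun s _ => hf s)
    have hFstrong : StrongConvexOn 𝒳 (1 / η r) (fun y => S r y + Ψ y / η r) :=
      ftrl_strongConvexOn_comb hΨ hSconv (hηpos r)
    have hB := ftrl_strong_min (one_div_nonneg.mpr (hηpos r).le) hFstrong (hx𝒳 r) hz (hx r)
    have hA := ftrl_subgrad (hf r) (hx𝒳 r) hz (hf' r (x r) (hx𝒳 r))
    set G : ℝ := ‖f' r (x r)‖ with hG
    set d : ℝ := ‖z - x r‖ with hd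
    have hop : -(G * d) ≤ (f' r (x r)) (z - x r) := by
      have h1 : ‖(f' r (x r)) (z - x r)‖ ≤ G * d := (f' r (x r)).le_opNorm (z - x r)
    -- real norm is abs
      rw [Real.norm_eq_abs] at h1
      linarith [neg_abs_le ((f' r (x r)) (z - x r)), h1]
    have hη := hηpos r
    have h2 : 2 * G * d - η r * G ^ 2 ≤ d ^ 2 * (1 / η r) := by
      rw [mul_one_div, le_div_iff₀ hη]
      nlinarith [sq_nonneg (d - η r * G)]
    have hBe : S r (x r) + Ψ (x r) / η r + (1 / η r) / 2 * d ^ 2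
        ≤ S r z + Ψ z / η r := hB
    nlinarith [hA, hop, h2, hBe]
  -- inductive claim
  have claim : ∀ n (hn : n < R),
      (∑ s ∈ Finset.univ.filter (· < (⟨n, hn⟩ : Fin R)),
          (f s (x s) - η s / 2 * ‖f' s (x s)‖ ^ 2))
        ≤ S ⟨n, hn⟩ (x ⟨n, hn⟩) + Ψ (x ⟨n, hn⟩) / η ⟨n, hn⟩ := by
    intro n
    induction n with
    | zero =>
      intro hn
      have hempty : Finset.univ.filter (· < (⟨0, hn⟩ : Fin R)) = (∅ : Finset (Fin R)) := by
        apply Finset.filter_false_of_mem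
        intro s _
        simp [Fin.lt_def]
      have hS0 : S ⟨0, hn⟩ (x ⟨0, hn⟩) = 0 := by
        rw [hS]; simp only; rw [hempty]; simp
      rw [hempty, hS0, Finset.sum_empty]
      have h := div_nonneg (hΨ0 _ (hx𝒳 ⟨0, hn⟩)) (hηpos ⟨0, hn⟩).le
      linarith
    | succ n ih =>
      intro hn
      have hn' : n < R := by omega
      set rn : Fin R := ⟨n, hn'⟩ with hrn
      set rn1 : Fin R := ⟨n + 1, hn⟩ with hrn1
      have hnotmem : rn ∉ Finset.univ.filter (· < rn) := by simp
      have hsplit : Finset.univ.filter (· < rn1) = insert rn (Finset.univ.filter (· < rn)) := by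
        ext s
        simp only [Finset.mem_filter, Finset.mem_univ, true_and, Finset.mem_insert]
        rw [Fin.lt_def, Fin.lt_def, Fin.ext_iff]
        simp only [hrn, hrn1]
        omega
      have hSsplit : ∀ y, S rn1 y = S rn y + f rn y := by
        intro y
        rw [hS]; simp only
        rw [hsplit, Finset.sum_insert hnotmem]
        ring
      have hηle : η rn1 ≤ η rn := hηmono rn rn1 (by rw [Fin.le_def]; simp [hrn, hrn1])
      have hdivle : Ψ (x rn1) / η rn ≤ Ψ (x rn1) / η rn1 := by
        gcongr
        · exact hΨ0 _ (hx𝒳 rn1)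
        · exact hηpos rn1
      have hkey := key rn (x rn1) (hx𝒳 rn1)
      have hih := ih hn'
      rw [hsplit, Finset.sum_insert hnotmem]
      have hgoalrw : S rn1 (x rn1) = S rn (x rn1) + f rn (x rn1) := hSsplit (x rn1)
      rw [hgoalrw]
      linarith [hih, hkey, hdivle]
  -- conclude
  have hRn : R - 1 < R := by omega
  set L : Fin R := ⟨R - 1, hRn⟩ with hL
  have hclaim := claim (R - 1) hRn
  have hkey := key L xstar hstar
  have hnotmem : L ∉ Finset.univ.filter (· < L) := by simp
  have huniv : (Finset.univ : Finset (Fin R)) = insert L (Finset.univ.filter (· < L)) := by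
    ext s
    simp only [Finset.mem_univ, Finset.mem_insert, Finset.mem_filter, true_and, true_iff]
    rw [Fin.ext_iff, Fin.lt_def]
    simp only [hL]
    omega
  have hηL : η ⟨R - 1, by omega⟩ = η L := rfl
  rw [hηL, huniv, Finset.sum_insert hnotmem, Finset.sum_insert hnotmem]
  have e1 : ∑ s ∈ Finset.univ.filter (· < L), (f s (x s) - f s xstar)
      = (∑ s ∈ Finset.univ.filter (· < L), f s (x s))
        - ∑ s ∈ Finset.univ.filter (· < L), f s xstar := Finset.sum_sub_distrib _ _
  have e2 : ∑ s ∈ Finset.univ.filter (· < L), (f s (x s) - η s / 2 * ‖f' s (x s)‖ ^ 2)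
      = (∑ s ∈ Finset.univ.filter (· < L), f s (x s))
        - ∑ s ∈ Finset.univ.filter (· < L), (η s / 2 * ‖f' s (x s)‖ ^ 2) :=
    Finset.sum_sub_distrib _ _
  have e3 : (1 : ℝ) / 2 * ∑ s ∈ Finset.univ.filter (· < L), (η s * ‖f' s (x s)‖ ^ 2)
      = ∑ s ∈ Finset.univ.filter (· < L), (η s / 2 * ‖f' s (x s)‖ ^ 2) := by
    rw [Finset.mul_sum]
    exact Finset.sum_congr rfl fun s _ => by ring
  rw [e2] at hclaim
  have hSLstar : S L xstar = ∑ s ∈ Finset.univ.filter (· < L), f s xstar := rfl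
  rw [hSLstar] at hkey
  rw [e1]
  linarith [hclaim, hkey, e3]
end

section
/- Let x_1, ..., x_n be independent mean-zero random vectors in ℝ^d with ‖x_i‖₂ ≤ √d almost surely. Let z = (1/n)·∑_{i=1}^n x_i. Then for every 0 < ε < √d, Pr{‖z‖₂ ≥ ε} ≤ exp(-n·ε²/(8d) + 1/4). -/
open MeasureTheory ProbabilityTheory

/-- Core calculus inequality for Hoeffding's lemma. -/

lemma hoeffding_core {γ t : ℝ} (hγ0 : 0 ≤ γ) (hγ1 : γ ≤ 1) (ht : 0 ≤ t) :
    (1 - γ) + γ * Real.exp t ≤ Real.exp (γ * t + t ^ 2 / 8) := by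
  set g : ℝ → ℝ := fun s => 1 - γ + γ * Real.exp s with hg
  have hgpos : ∀ s, 0 < g s := by
    intro s
    rcases eq_or_lt_of_le hγ0 with h | h
    · simp [hg, ← h]
    · have : 0 < γ * Real.exp s := mul_pos h (Real.exp_pos s)
      have : 0 ≤ 1 - γ := by linarith
      simp only [hg]
      nlinarith [Real.exp_pos s]
  set φ : ℝ → ℝ := fun s => γ * s + s ^ 2 / 8 - Real.log (g s) with hφ
  set φ' : ℝ → ℝ := fun s => γ + s / 4 - γ * Real.exp s / g s with hφ'
  have hgderiv : ∀ s, HasDerivAt g (γ * Real.exp s) s := by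
    intro s
    exact ((Real.hasDerivAt_exp s).const_mul γ).const_add (1 - γ)
  have hφderiv : ∀ s, HasDerivAt φ (φ' s) s := by
    intro s
    have := ((hgderiv s).log (hgpos s).ne')
    have h1 : HasDerivAt (fun s => γ * s + s ^ 2 / 8) (γ + s / 4) s := by
      have := ((hasDerivAt_pow 2 s).div_const 8).const_add 0
      have h2 : HasDerivAt (fun s : ℝ => γ * s) γ s := by
        simpa using (hasDerivAt_id s).const_mul γ
      exact (h2.add ((hasDerivAt_pow 2 s).div_const 8)).congr_deriv (by ring)
    exact h1.sub this
  have hφ'deriv : ∀ s, HasDerivAt φ' (1 / 4 - γ * Real.exp s * (1 - γ) / (g s) ^ 2) s := by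
    intro s
    have hnum : HasDerivAt (fun s => γ * Real.exp s) (γ * Real.exp s) s :=
      (Real.hasDerivAt_exp s).const_mul γ
    have hdiv : HasDerivAt (fun s => γ * Real.exp s / g s)
        ((γ * Real.exp s * g s - γ * Real.exp s * (γ * Real.exp s)) / (g s) ^ 2) s :=
      hnum.div (hgderiv s) (hgpos s).ne'
    have h1 : HasDerivAt (fun s => γ + s / 4) (1 / 4) s := by
      simpa using ((hasDerivAt_id s).div_const 4).const_add γ
    have := h1.sub hdiv
    refine this.congr_deriv ?_
    have : g s = 1 - γ + γ * Real.exp s := rfl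
    rw [this]
    ring
  have hφ'nonneg : ∀ s, 0 ≤ s → 0 ≤ φ' s := by
    intro s hs
    have hmono : MonotoneOn φ' (Set.Ici 0) := by
      apply monotoneOn_of_deriv_nonneg (convex_Ici 0)
      · exact Continuous.continuousOn (by
          fun_prop (disch := intro s; exact (hgpos s).ne'))
      · intro u hu
        exact (hφ'deriv u).differentiableAt.differentiableWithinAt
      · intro u hu
        rw [(hφ'deriv u).deriv]
        have h2 : 0 < (g u) ^ 2 := pow_pos (hgpos u) 2
        rw [sub_nonneg, div_le_iff₀ h2]
        simp only [hg]
        nlinarith [sq_nonneg ((1 - γ) - γ * Real.exp u)]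
    have hφ'0 : φ' 0 = 0 := by
      simp only [hφ', hg]
      simp
    have := hmono (Set.self_mem_Ici) hs hs
    rwa [hφ'0] at this
  have hφmono : MonotoneOn φ (Set.Ici 0) := by
    apply monotoneOn_of_deriv_nonneg (convex_Ici 0)
    · exact Continuous.continuousOn (by
        fun_prop (disch := intro s; exact (hgpos s).ne'))
    · intro u hu
      exact (hφderiv u).differentiableAt.differentiableWithinAt
    · intro u hu
      rw [(hφderiv u).deriv]
      exact hφ'nonneg u (le_of_lt (by simpa using hu))
  have hφ0 : φ 0 = 0 := by
    simp only [hφ, hg]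
    simp
  have hφt : 0 ≤ φ t := by
    have := hφmono Set.self_mem_Ici ht ht
    rwa [hφ0] at this
  have : Real.log (g t) ≤ γ * t + t ^ 2 / 8 := by
    simp only [hφ] at hφt; linarith
  calc g t = Real.exp (Real.log (g t)) := (Real.exp_log (hgpos t)).symm
    _ ≤ Real.exp (γ * t + t ^ 2 / 8) := Real.exp_le_exp.mpr this

/-- Hoeffding's lemma, mgf form. -/
lemma hoeffding_mgf {α : Type*} [MeasurableSpace α] (ν : Measure α) [IsProbabilityMeasure ν]
    (h : α → ℝ) (hmeas : AEStronglyMeasurable h ν) {p q : ℝ} (hpq : p < q)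
    (hb : ∀ᵐ a ∂ν, h a ∈ Set.Icc p q) {l : ℝ} (hl : 0 ≤ l) :
    ∫ a, Real.exp (l * h a) ∂ν
      ≤ Real.exp (l * ∫ a, h a ∂ν + l ^ 2 * (q - p) ^ 2 / 8) := by
  have hqp : 0 < q - p := by linarith
  have hint : Integrable h ν := by
    refine Integrable.mono' (integrable_const (max |p| |q|)) hmeas ?_
    filter_upwards [hb] with a ⟨h1, h2⟩
    rw [Real.norm_eq_abs, abs_le]
    constructor
    · calc -(max |p| |q|) ≤ -|p| := by simp
        _ ≤ p := neg_abs_le p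
        _ ≤ h a := h1
    · calc h a ≤ q := h2
        _ ≤ |q| := le_abs_self q
        _ ≤ max |p| |q| := le_max_right _ _
  set m : ℝ := ∫ a, h a ∂ν with hm
  have hmp : p ≤ m := by
    have : ∫ _ : α, p ∂ν ≤ ∫ a, h a ∂ν :=
      integral_mono_ae (integrable_const p) hint (by filter_upwards [hb] with a ha using ha.1)
    simpa using this
  have hmq : m ≤ q := by
    have : ∫ a, h a ∂ν ≤ ∫ _ : α, q ∂ν :=
      integral_mono_ae hint (integrable_const q) (by filter_upwards [hb] with a ha using ha.2)
    simpa using this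
  -- pointwise convexity bound
  have hconv : ∀ᵐ a ∂ν, Real.exp (l * h a)
      ≤ ((q - h a) * Real.exp (l * p) + (h a - p) * Real.exp (l * q)) / (q - p) := by
    filter_upwards [hb] with a ⟨h1, h2⟩
    have hθ0 : 0 ≤ (h a - p) / (q - p) := div_nonneg (by linarith) hqp.le
    have hθ1 : 0 ≤ (q - h a) / (q - p) := div_nonneg (by linarith) hqp.le
    have hsum : (q - h a) / (q - p) + (h a - p) / (q - p) = 1 := by
      field_simp
      ring
    have := convexOn_exp.2 (Set.mem_univ (l * p)) (Set.mem_univ (l * q)) hθ1 hθ0 hsum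
    have harg : (q - h a) / (q - p) * (l * p) + (h a - p) / (q - p) * (l * q) = l * h a := by
      field_simp
      ring
    rw [smul_eq_mul, smul_eq_mul, smul_eq_mul, smul_eq_mul, harg] at this
    calc Real.exp (l * h a)
        ≤ (q - h a) / (q - p) * Real.exp (l * p) + (h a - p) / (q - p) * Real.exp (l * q) := this
      _ = ((q - h a) * Real.exp (l * p) + (h a - p) * Real.exp (l * q)) / (q - p) := by ring
  have hintexp : Integrable (fun a => Real.exp (l * h a)) ν := by
    refine Integrable.mono' (integrable_const (Real.exp (l * q)))
      (Real.continuous_exp.comp_aestronglyMeasurable (hmeas.const_smul l)) ?_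
    filter_upwards [hb] with a ⟨_, h2⟩
    rw [Real.norm_eq_abs, abs_of_pos (Real.exp_pos _)]
    exact Real.exp_le_exp.mpr (mul_le_mul_of_nonneg_left h2 hl)
  have hintrhs : Integrable
      (fun a => ((q - h a) * Real.exp (l * p) + (h a - p) * Real.exp (l * q)) / (q - p)) ν := by
    apply Integrable.div_const
    exact (((integrable_const q).sub hint).mul_const _).add ((hint.sub (integrable_const p)).mul_const _)
  have step1 : ∫ a, Real.exp (l * h a) ∂ν
      ≤ ((q - m) * Real.exp (l * p) + (m - p) * Real.exp (l * q)) / (q - p) := by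
    calc ∫ a, Real.exp (l * h a) ∂ν
        ≤ ∫ a, ((q - h a) * Real.exp (l * p) + (h a - p) * Real.exp (l * q)) / (q - p) ∂ν :=
          integral_mono_ae hintexp hintrhs hconv
      _ = ((q - m) * Real.exp (l * p) + (m - p) * Real.exp (l * q)) / (q - p) := by
          rw [integral_div]
          congr 1
          have efun : (fun a => (q - h a) * Real.exp (l * p) + (h a - p) * Real.exp (l * q))
              = fun a => (Real.exp (l * q) - Real.exp (l * p)) * h a
                + (q * Real.exp (l * p) - p * Real.exp (l * q)) := by
            funext a; ring
          rw [efun, integral_add (hint.const_mul _) (integrable_const _),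
            integral_const_mul, integral_const]
          simp only [measure_univ, ENNReal.toReal_one, probReal_univ, one_smul, ← hm]
          ring
  -- apply the core inequality
  set γ : ℝ := (m - p) / (q - p) with hγ
  have hγ0 : 0 ≤ γ := div_nonneg (by linarith) hqp.le
  have hγ1 : γ ≤ 1 := by
    rw [hγ, div_le_one hqp]; linarith
  have ht : 0 ≤ l * (q - p) := mul_nonneg hl hqp.le
  have hcore := hoeffding_core hγ0 hγ1 ht
  have key : ((q - m) * Real.exp (l * p) + (m - p) * Real.exp (l * q)) / (q - p)
      ≤ Real.exp (l * m + l ^ 2 * (q - p) ^ 2 / 8) := by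
    have e1 : ((q - m) * Real.exp (l * p) + (m - p) * Real.exp (l * q)) / (q - p)
        = Real.exp (l * p) * ((1 - γ) + γ * Real.exp (l * (q - p))) := by
      rw [hγ]
      rw [show l * q = l * p + l * (q - p) by ring, Real.exp_add]
      field_simp
      ring
    have e2 : Real.exp (l * p) * Real.exp (γ * (l * (q - p)) + (l * (q - p)) ^ 2 / 8)
        = Real.exp (l * m + l ^ 2 * (q - p) ^ 2 / 8) := by
      rw [← Real.exp_add]
      congr 1
      rw [hγ]
      field_simp
      ring
    calc ((q - m) * Real.exp (l * p) + (m - p) * Real.exp (l * q)) / (q - p)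
        = Real.exp (l * p) * ((1 - γ) + γ * Real.exp (l * (q - p))) := e1
      _ ≤ Real.exp (l * p) * Real.exp (γ * (l * (q - p)) + (l * (q - p)) ^ 2 / 8) := by
          exact mul_le_mul_of_nonneg_left hcore (Real.exp_pos _).le
      _ = Real.exp (l * m + l ^ 2 * (q - p) ^ 2 / 8) := e2
  exact step1.trans key

variable {d : ℕ}

local notation "E" => EuclideanSpace ℝ (Fin d)

/-- integrability of a Lipschitz function against a measure concentrated on a ball -/
lemma integrable_lip_of_bdd {ν : Measure E} [IsProbabilityMeasure ν] {C : ℝ}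
    (hb : ∀ᵐ v ∂ν, ‖v‖ ≤ C) {f : E → ℝ} (hf : LipschitzWith 1 f) :
    Integrable f ν := by
  refine Integrable.mono' (integrable_const (|f 0| + C)) hf.continuous.aestronglyMeasurable ?_
  filter_upwards [hb] with v hv
  rw [Real.norm_eq_abs]
  have := hf.dist_le_mul v 0
  simp only [NNReal.coe_one, one_mul, Real.dist_eq, dist_zero_right] at this
  calc |f v| ≤ |f v - f 0| + |f 0| := by
        have := abs_sub_abs_le_abs_sub (f v) (f 0); have := abs_add_le (f v - f 0) (f 0)
        calc |f v| = |(f v - f 0) + f 0| := by ring_nf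
          _ ≤ |f v - f 0| + |f 0| := abs_add_le _ _
    _ ≤ ‖v‖ + |f 0| := by linarith
    _ ≤ |f 0| + C := by linarith
lemma mgf_lipschitz_sum
    {Ω : Type*} [MeasurableSpace Ω] (μ : Measure Ω) [IsProbabilityMeasure μ]
    (hd : 0 < d) {n : ℕ}
    (x : Fin n → Ω → E)
    (hmeas : ∀ i, Measurable (x i))
    (hindep : iIndepFun x μ)
    (hbdd : ∀ i, ∀ᵐ ω ∂μ, ‖x i ω‖ ≤ Real.sqrt d)
    {l : ℝ} (hl : 0 ≤ l) :
    ∀ (s : Finset (Fin n)) (f : E → ℝ), LipschitzWith 1 f →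
    ∫ ω, Real.exp (l * f (∑ i ∈ s, x i ω)) ∂μ
      ≤ Real.exp (s.card * (l ^ 2 * d / 2) + l * ∫ ω, f (∑ i ∈ s, x i ω) ∂μ) := by
  classical
  intro s
  induction s using Finset.induction_on with
  | empty => intro f hf; simp
  | @insert j s' hj ih =>
    intro f hf
    set U : Ω → E := fun ω => ∑ i ∈ s', x i ω with hU
    have hUmeas : Measurable U := by
      apply Finset.measurable_sum
      intro i _; exact hmeas i
    have hVmeas : Measurable (x j) := hmeas j
    have hIndep : IndepFun U (x j) μ := by
      have := hindep.indepFun_finsetSum_of_notMem hmeas hj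
      have he : (∑ i ∈ s', x i) = U := by
        funext ω; simp [hU, Finset.sum_apply]
      rwa [he] at this
    set νU : Measure E := μ.map U with hνU
    set νV : Measure E := μ.map (x j) with hνV
    haveI : IsProbabilityMeasure νU := Measure.isProbabilityMeasure_map hUmeas.aemeasurable
    haveI : IsProbabilityMeasure νV := Measure.isProbabilityMeasure_map hVmeas.aemeasurable
    have hlaw : μ.map (fun ω => (U ω, x j ω)) = νU.prod νV :=
      (indepFun_iff_map_prod_eq_prod_map_map hUmeas.aemeasurable hVmeas.aemeasurable).mp hIndep
    have hsqd : (0:ℝ) < Real.sqrt d := Real.sqrt_pos.mpr (by positivity)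
    -- a.e. bounds on the laws
    have hVbdd : ∀ᵐ v ∂νV, ‖v‖ ≤ Real.sqrt d := by
      rw [hνV, ae_map_iff hVmeas.aemeasurable]
      · exact hbdd j
      · exact measurableSet_le (by fun_prop) measurable_const
    have hUbdd : ∀ᵐ u ∂νU, ‖u‖ ≤ s'.card * Real.sqrt d := by
      rw [hνU, ae_map_iff hUmeas.aemeasurable]
      · have hall : ∀ᵐ ω ∂μ, ∀ i, ‖x i ω‖ ≤ Real.sqrt d := ae_all_iff.mpr hbdd
        filter_upwards [hall] with ω hω
        calc ‖U ω‖ ≤ ∑ i ∈ s', ‖x i ω‖ := norm_sum_le _ _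
          _ ≤ ∑ _i ∈ s', Real.sqrt d := Finset.sum_le_sum (fun i _ => hω i)
          _ = s'.card * Real.sqrt d := by simp [Finset.sum_const, nsmul_eq_mul]
      · exact measurableSet_le (by fun_prop) measurable_const
    -- the averaged function g
    set g : E → ℝ := fun u => ∫ v, f (u + v) ∂νV with hg
    have hfint : ∀ u : E, Integrable (fun v => f (u + v)) νV := by
      intro u
      have h0 : LipschitzWith 1 (fun v : E => u + v) :=
        LipschitzWith.of_dist_le_mul (fun a b => by
          simp only [NNReal.coe_one, one_mul, dist_add_left, le_refl])
      exact integrable_lip_of_bdd hVbdd (by have := hf.comp h0; rw [mul_one] at this; exact this)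
    have hgLip : LipschitzWith 1 g := by
      apply LipschitzWith.of_dist_le_mul
      intro u1 u2
      simp only [NNReal.coe_one, one_mul]
      rw [Real.dist_eq, hg]
      have : (∫ v, f (u1 + v) ∂νV) - ∫ v, f (u2 + v) ∂νV
          = ∫ v, (f (u1 + v) - f (u2 + v)) ∂νV := (integral_sub (hfint u1) (hfint u2)).symm
      rw [this]
      calc |∫ v, (f (u1 + v) - f (u2 + v)) ∂νV| ≤ ∫ v, |f (u1 + v) - f (u2 + v)| ∂νV := by
            simpa [Real.norm_eq_abs] using
              norm_integral_le_integral_norm (μ := νV) (fun v => f (u1 + v) - f (u2 + v))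
        _ ≤ ∫ _v, dist u1 u2 ∂νV := by
            apply integral_mono_ae ((hfint u1).sub (hfint u2)).abs (integrable_const _)
            filter_upwards with v
            simp only [Pi.sub_apply]
            have h1 := hf.dist_le_mul (u1 + v) (u2 + v)
            simp only [NNReal.coe_one, one_mul, Real.dist_eq] at h1
            have h2 : dist (u1 + v) (u2 + v) = dist u1 u2 := dist_add_right u1 u2 v
            rw [h2] at h1
            exact h1
        _ = dist u1 u2 := by simp
    -- pointwise Hoeffding bound in v
    have hkey : ∀ u : E, ∫ v, Real.exp (l * f (u + v)) ∂νV
        ≤ Real.exp (l * g u + l ^ 2 * d / 2) := by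
      intro u
      have hb' : ∀ᵐ v ∂νV, f (u + v) ∈ Set.Icc (f u - Real.sqrt d) (f u + Real.sqrt d) := by
        filter_upwards [hVbdd] with v hv
        have h1 := hf.dist_le_mul (u + v) u
        simp only [NNReal.coe_one, one_mul, Real.dist_eq] at h1
        have h2 : dist (u + v) u ≤ Real.sqrt d := by
          rw [dist_eq_norm, add_sub_cancel_left]; exact hv
        obtain ⟨h3, h4⟩ := abs_le.mp (h1.trans h2)
        exact ⟨by linarith, by linarith⟩
      have hmgf := hoeffding_mgf νV (fun v => f (u + v))
        ((hf.continuous.comp (continuous_const.add continuous_id)).aestronglyMeasurable)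
        (show f u - Real.sqrt d < f u + Real.sqrt d by linarith) hb' hl
      have heq : l * (∫ v, f (u + v) ∂νV)
          + l ^ 2 * (f u + Real.sqrt d - (f u - Real.sqrt d)) ^ 2 / 8
          = l * g u + l ^ 2 * d / 2 := by
        have h4 : (f u + Real.sqrt d - (f u - Real.sqrt d)) ^ 2 = 4 * d := by
          rw [show (f u + Real.sqrt d - (f u - Real.sqrt d)) = 2 * Real.sqrt d by ring,
            mul_pow, Real.sq_sqrt (by positivity : (0:ℝ) ≤ (d:ℝ))]
          ring
        rw [h4, hg]
        ring
      rw [heq] at hmgf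
      exact hmgf
    -- a.e. bound in Ω for U
    have hUbddΩ : ∀ᵐ ω ∂μ, ‖U ω‖ ≤ s'.card * Real.sqrt d := by
      have hall : ∀ᵐ ω ∂μ, ∀ i, ‖x i ω‖ ≤ Real.sqrt d := ae_all_iff.mpr hbdd
      filter_upwards [hall] with ω hω
      calc ‖U ω‖ ≤ ∑ i ∈ s', ‖x i ω‖ := norm_sum_le _ _
        _ ≤ ∑ _i ∈ s', Real.sqrt d := Finset.sum_le_sum (fun i _ => hω i)
        _ = s'.card * Real.sqrt d := by simp [Finset.sum_const, nsmul_eq_mul]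
    have hsumeq : ∀ ω, ∑ i ∈ insert j s', x i ω = U ω + x j ω := by
      intro ω; rw [Finset.sum_insert hj]; exact add_comm _ _
    set C : ℝ := |f 0| + (s'.card + 1) * Real.sqrt d with hC
    have habsf : ∀ w : E, |f w| ≤ |f 0| + ‖w‖ := by
      intro w
      have h1 := hf.dist_le_mul w 0
      simp only [NNReal.coe_one, one_mul, Real.dist_eq, dist_zero_right] at h1
      calc |f w| = |(f w - f 0) + f 0| := by ring_nf
        _ ≤ |f w - f 0| + |f 0| := abs_add_le _ _
        _ ≤ |f 0| + ‖w‖ := by linarith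
    have hprodae : ∀ᵐ p ∂(νU.prod νV), ‖p.1 + p.2‖ ≤ (s'.card + 1) * Real.sqrt d := by
      rw [← hlaw, ae_map_iff ((hUmeas.prodMk hVmeas)).aemeasurable
        (measurableSet_le (by fun_prop) measurable_const)]
      filter_upwards [hUbddΩ, hbdd j] with ω h1 h2
      calc ‖U ω + x j ω‖ ≤ ‖U ω‖ + ‖x j ω‖ := norm_add_le _ _
        _ ≤ s'.card * Real.sqrt d + Real.sqrt d := add_le_add h1 h2
        _ = (s'.card + 1) * Real.sqrt d := by ring
    have hΦcont : Continuous (fun p : E × E => Real.exp (l * f (p.1 + p.2))) := by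
      exact Real.continuous_exp.comp ((continuous_const.mul
        (hf.continuous.comp (continuous_fst.add continuous_snd))))
    have hΦint : Integrable (fun p : E × E => Real.exp (l * f (p.1 + p.2))) (νU.prod νV) := by
      refine Integrable.mono' (integrable_const (Real.exp (l * C)))
        hΦcont.aestronglyMeasurable ?_
      filter_upwards [hprodae] with p hp
      rw [Real.norm_eq_abs, abs_of_pos (Real.exp_pos _)]
      apply Real.exp_le_exp.mpr
      apply mul_le_mul_of_nonneg_left _ hl
      calc f (p.1 + p.2) ≤ |f (p.1 + p.2)| := le_abs_self _
        _ ≤ |f 0| + ‖p.1 + p.2‖ := habsf _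
        _ ≤ C := by rw [hC]; linarith
    have hfprodint : Integrable (fun p : E × E => f (p.1 + p.2)) (νU.prod νV) := by
      refine Integrable.mono' (integrable_const C)
        ((hf.continuous.comp (continuous_fst.add continuous_snd)).aestronglyMeasurable) ?_
      filter_upwards [hprodae] with p hp
      rw [Real.norm_eq_abs]
      calc |f (p.1 + p.2)| ≤ |f 0| + ‖p.1 + p.2‖ := habsf _
        _ ≤ C := by rw [hC]; linarith
    have e1 : ∫ ω, Real.exp (l * f (U ω + x j ω)) ∂μ
        = ∫ p : E × E, Real.exp (l * f (p.1 + p.2)) ∂(νU.prod νV) := by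
      rw [← hlaw, integral_map ((hUmeas.prodMk hVmeas)).aemeasurable
        hΦcont.aestronglyMeasurable]
    have e2 : ∫ p : E × E, Real.exp (l * f (p.1 + p.2)) ∂(νU.prod νV)
        = ∫ u, ∫ v, Real.exp (l * f (u + v)) ∂νV ∂νU := integral_prod _ hΦint
    have hgcont : Continuous g := hgLip.continuous
    have hint2 : Integrable (fun u => Real.exp (l * g u + l ^ 2 * d / 2)) νU := by
      refine Integrable.mono' (integrable_const
        (Real.exp (l * (|g 0| + s'.card * Real.sqrt d) + l ^ 2 * d / 2)))
        ((Real.continuous_exp.comp ((continuous_const.mul hgcont).add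
          continuous_const)).aestronglyMeasurable) ?_
      filter_upwards [hUbdd] with u hu
      rw [Real.norm_eq_abs, abs_of_pos (Real.exp_pos _)]
      apply Real.exp_le_exp.mpr
      have habsg : |g u| ≤ |g 0| + ‖u‖ := by
        have h1 := hgLip.dist_le_mul u 0
        simp only [NNReal.coe_one, one_mul, Real.dist_eq, dist_zero_right] at h1
        calc |g u| = |(g u - g 0) + g 0| := by ring_nf
          _ ≤ |g u - g 0| + |g 0| := abs_add_le _ _
          _ ≤ |g 0| + ‖u‖ := by linarith
      have : g u ≤ |g 0| + s'.card * Real.sqrt d := by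
        calc g u ≤ |g u| := le_abs_self _
          _ ≤ |g 0| + ‖u‖ := habsg
          _ ≤ |g 0| + s'.card * Real.sqrt d := by linarith
      nlinarith [mul_le_mul_of_nonneg_left this hl]
    have e3 : ∫ u, ∫ v, Real.exp (l * f (u + v)) ∂νV ∂νU
        ≤ ∫ u, Real.exp (l * g u + l ^ 2 * d / 2) ∂νU := by
      apply integral_mono_ae hΦint.integral_prod_left hint2
      filter_upwards with u
      exact hkey u
    have e4 : ∫ u, Real.exp (l * g u + l ^ 2 * d / 2) ∂νU
        = (∫ u, Real.exp (l * g u) ∂νU) * Real.exp (l ^ 2 * d / 2) := by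
      simp only [Real.exp_add]
      rw [integral_mul_const]
    have hc5 : Continuous fun u : E => Real.exp (l * g u) :=
      Real.continuous_exp.comp (continuous_const.mul hgcont)
    have e5 : ∫ u, Real.exp (l * g u) ∂νU = ∫ ω, Real.exp (l * g (U ω)) ∂μ := by
      rw [hνU, integral_map hUmeas.aemeasurable hc5.aestronglyMeasurable]
    have e6 := ih g hgLip
    have e7 : ∫ ω, g (U ω) ∂μ = ∫ ω, f (U ω + x j ω) ∂μ := by
      have p1 : ∫ ω, g (U ω) ∂μ = ∫ u, g u ∂νU := by
        rw [hνU, integral_map hUmeas.aemeasurable hgcont.aestronglyMeasurable]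
      have p2 : ∫ u, g u ∂νU = ∫ p : E × E, f (p.1 + p.2) ∂(νU.prod νV) :=
        (integral_prod _ hfprodint).symm
      have hcp : Continuous fun p : E × E => f (p.1 + p.2) :=
        hf.continuous.comp (continuous_fst.add continuous_snd)
      have p3 : ∫ p : E × E, f (p.1 + p.2) ∂(νU.prod νV) = ∫ ω, f (U ω + x j ω) ∂μ := by
        rw [← hlaw, integral_map ((hUmeas.prodMk hVmeas)).aemeasurable
          hcp.aestronglyMeasurable]
      rw [p1, p2, p3]
    -- assemble
    simp only [hsumeq]
    have hcard : ((insert j s').card : ℝ) = s'.card + 1 := by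
      rw [Finset.card_insert_of_notMem hj]; push_cast; ring
    calc ∫ ω, Real.exp (l * f (U ω + x j ω)) ∂μ
        = ∫ u, ∫ v, Real.exp (l * f (u + v)) ∂νV ∂νU := by rw [e1, e2]
      _ ≤ (∫ u, Real.exp (l * g u) ∂νU) * Real.exp (l ^ 2 * d / 2) := by rw [← e4]; exact e3
      _ = (∫ ω, Real.exp (l * g (U ω)) ∂μ) * Real.exp (l ^ 2 * d / 2) := by rw [e5]
      _ ≤ Real.exp (s'.card * (l ^ 2 * d / 2) + l * ∫ ω, g (U ω) ∂μ)
            * Real.exp (l ^ 2 * d / 2) := by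
          exact mul_le_mul_of_nonneg_right e6 (Real.exp_pos _).le
      _ = Real.exp ((insert j s').card * (l ^ 2 * ↑d / 2)
            + l * ∫ ω, f (U ω + x j ω) ∂μ) := by
          rw [← Real.exp_add, e7, hcard]
          ring_nf

lemma exp_norm_sum_le
    {Ω : Type*} [MeasurableSpace Ω] (μ : Measure Ω) [IsProbabilityMeasure μ]
    {n : ℕ} (x : Fin n → Ω → E)
    (hmeas : ∀ i, Measurable (x i))
    (hindep : iIndepFun x μ)
    (hint : ∀ i, Integrable (x i) μ)
    (hmean : ∀ i, ∫ ω, x i ω ∂μ = 0)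
    (hbdd : ∀ i, ∀ᵐ ω ∂μ, ‖x i ω‖ ≤ Real.sqrt d) :
    ∫ ω, ‖∑ i, x i ω‖ ∂μ ≤ Real.sqrt (n * d) := by
  have hSmeas : Measurable (fun ω => ∑ i, x i ω) :=
    Finset.measurable_sum _ (fun i _ => hmeas i)
  have hall : ∀ᵐ ω ∂μ, ∀ i, ‖x i ω‖ ≤ Real.sqrt d := ae_all_iff.mpr hbdd
  have hSbdd : ∀ᵐ ω ∂μ, ‖∑ i, x i ω‖ ≤ n * Real.sqrt d := by
    filter_upwards [hall] with ω hω
    calc ‖∑ i, x i ω‖ ≤ ∑ i, ‖x i ω‖ := norm_sum_le _ _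
      _ ≤ ∑ _i : Fin n, Real.sqrt d := Finset.sum_le_sum (fun i _ => hω i)
      _ = n * Real.sqrt d := by simp [Finset.sum_const, nsmul_eq_mul]
  have hnormint : Integrable (fun ω => ‖∑ i, x i ω‖) μ := by
    refine Integrable.mono' (integrable_const ((n:ℝ) * Real.sqrt d))
      hSmeas.norm.aestronglyMeasurable ?_
    filter_upwards [hSbdd] with ω hω
    rwa [norm_norm]
  have hsqint : Integrable (fun ω => ‖∑ i, x i ω‖ ^ 2) μ := by
    refine Integrable.mono' (integrable_const (((n:ℝ) * Real.sqrt d) ^ 2))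
      ((hSmeas.norm.pow_const 2).aestronglyMeasurable) ?_
    filter_upwards [hSbdd] with ω hω
    rw [Real.norm_eq_abs, abs_of_nonneg (by positivity)]
    exact pow_le_pow_left₀ (norm_nonneg _) hω 2
  -- cross terms
  have hterm_int : ∀ i j : Fin n, Integrable (fun ω => (inner ℝ (x i ω) (x j ω) : ℝ)) μ := by
    intro i j
    refine Integrable.mono' (integrable_const ((d:ℝ)))
      (((hmeas i).inner (hmeas j)).aestronglyMeasurable) ?_
    filter_upwards [hbdd i, hbdd j] with ω h1 h2
    rw [Real.norm_eq_abs]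
    calc |(inner ℝ (x i ω) (x j ω) : ℝ)| ≤ ‖x i ω‖ * ‖x j ω‖ := abs_real_inner_le_norm _ _
      _ ≤ Real.sqrt d * Real.sqrt d :=
          mul_le_mul h1 h2 (norm_nonneg _) (Real.sqrt_nonneg _)
      _ = d := Real.mul_self_sqrt (by positivity)
  have hoffdiag : ∀ i j : Fin n, i ≠ j → ∫ ω, (inner ℝ (x i ω) (x j ω) : ℝ) ∂μ = 0 := by
    intro i j hij
    have hproj : ∀ k, ∀ i : Fin n, ∫ ω, x i ω k ∂μ = 0 := by
      intro k i
      have := (EuclideanSpace.proj (𝕜 := ℝ) k).integral_comp_comm (hint i)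
      rw [hmean i] at this
      simpa using this
    have hinner : ∀ ω, (inner ℝ (x i ω) (x j ω) : ℝ) = ∑ k, x i ω k * x j ω k := by
      intro ω
      simp [PiLp.inner_apply, RCLike.inner_apply, conj_trivial]
      exact Finset.sum_congr rfl (fun k _ => mul_comm _ _)
    have hcomp_int : ∀ (i : Fin n) (k : Fin d), Integrable (fun ω => x i ω k) μ := by
      intro i k
      exact (EuclideanSpace.proj (𝕜 := ℝ) k).integrable_comp (hint i)
    calc ∫ ω, (inner ℝ (x i ω) (x j ω) : ℝ) ∂μ
        = ∫ ω, ∑ k, x i ω k * x j ω k ∂μ := by simp_rw [hinner]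
      _ = ∑ k, ∫ ω, x i ω k * x j ω k ∂μ := by
          apply integral_finset_sum
          intro k _
          have habs : ∀ (u : EuclideanSpace ℝ (Fin d)) (k : Fin d), |u k| ≤ ‖u‖ := by
            intro u k
            rw [EuclideanSpace.norm_eq, ← Real.sqrt_sq_eq_abs]
            apply Real.sqrt_le_sqrt
            have := Finset.single_le_sum (f := fun l => ‖u l‖ ^ 2)
              (fun l _ => sq_nonneg _) (Finset.mem_univ k)
            simpa [Real.norm_eq_abs, sq_abs] using this
          refine Integrable.mono' (integrable_const ((d:ℝ)))
            (((hcomp_int i k).aestronglyMeasurable.mul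
              (hcomp_int j k).aestronglyMeasurable)) ?_
          filter_upwards [hbdd i, hbdd j] with ω h1 h2
          rw [Real.norm_eq_abs, abs_mul]
          calc |x i ω k| * |x j ω k| ≤ ‖x i ω‖ * ‖x j ω‖ :=
                mul_le_mul (habs _ _) (habs _ _) (abs_nonneg _) (norm_nonneg _)
            _ ≤ Real.sqrt d * Real.sqrt d :=
                mul_le_mul h1 h2 (norm_nonneg _) (Real.sqrt_nonneg _)
            _ = d := Real.mul_self_sqrt (by positivity)
      _ = 0 := by
          apply Finset.sum_eq_zero
          intro k _
          have hik : IndepFun (fun ω => x i ω k) (fun ω => x j ω k) μ := by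
            have h0 := (hindep.indepFun hij).comp
              (φ := fun u : E => u k) (ψ := fun u : E => u k)
              (EuclideanSpace.proj (𝕜 := ℝ) k).continuous.measurable
              (EuclideanSpace.proj (𝕜 := ℝ) k).continuous.measurable
            exact h0
          have := hik.integral_mul_eq_mul_integral ((hcomp_int i k)).aestronglyMeasurable
            ((hcomp_int j k)).aestronglyMeasurable
          rw [show (fun ω => x i ω k) * (fun ω => x j ω k) = fun ω => x i ω k * x j ω k from rfl]
            at this
          rw [this, hproj k i, zero_mul]
  have hsq : ∫ ω, ‖∑ i, x i ω‖ ^ 2 ∂μ ≤ (n:ℝ) * d := by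
    have hns : ∀ ω, ‖∑ i, x i ω‖ ^ 2 = ∑ i, ∑ j, (inner ℝ (x i ω) (x j ω) : ℝ) := by
      intro ω
      rw [← real_inner_self_eq_norm_sq, sum_inner]
      exact Finset.sum_congr rfl (fun i _ => by rw [inner_sum])
    calc ∫ ω, ‖∑ i, x i ω‖ ^ 2 ∂μ
        = ∑ i, ∑ j, ∫ ω, (inner ℝ (x i ω) (x j ω) : ℝ) ∂μ := by
          simp_rw [hns]
          rw [integral_finset_sum _
            (fun i _ => integrable_finset_sum _ (fun j _ => hterm_int i j))]
          exact Finset.sum_congr rfl fun i _ =>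
            integral_finset_sum _ (fun j _ => hterm_int i j)
      _ = ∑ i, ∫ ω, (inner ℝ (x i ω) (x i ω) : ℝ) ∂μ := by
          apply Finset.sum_congr rfl
          intro i _
          rw [Finset.sum_eq_single i]
          · intro j _ hji
            exact hoffdiag i j (Ne.symm hji)
          · intro h
            exact absurd (Finset.mem_univ i) h
      _ ≤ ∑ _i : Fin n, (d:ℝ) := by
          apply Finset.sum_le_sum
          intro i _
          have hptw : ∀ᵐ ω ∂μ, (inner ℝ (x i ω) (x i ω) : ℝ) ≤ (d:ℝ) := by
            filter_upwards [hbdd i] with ω h1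
            rw [real_inner_self_eq_norm_sq]
            calc ‖x i ω‖ ^ 2 ≤ Real.sqrt d ^ 2 :=
                  pow_le_pow_left₀ (norm_nonneg _) h1 2
              _ = d := Real.sq_sqrt (by positivity)
          calc ∫ ω, (inner ℝ (x i ω) (x i ω) : ℝ) ∂μ
              ≤ ∫ _ω, (d:ℝ) ∂μ := integral_mono_ae (hterm_int i i) (integrable_const _) hptw
            _ = d := by simp
      _ = (n:ℝ) * d := by simp [Finset.sum_const, nsmul_eq_mul]
  set m : ℝ := ∫ ω, ‖∑ i, x i ω‖ ∂μ with hm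
  have hm0 : 0 ≤ m := integral_nonneg fun ω => norm_nonneg _
  have hvar : 0 ≤ ∫ ω, (‖∑ i, x i ω‖ - m) ^ 2 ∂μ := integral_nonneg fun ω => sq_nonneg _
  have hexp : ∫ ω, (‖∑ i, x i ω‖ - m) ^ 2 ∂μ
      = (∫ ω, ‖∑ i, x i ω‖ ^ 2 ∂μ) - m ^ 2 := by
    have hptw : ∀ ω, (‖∑ i, x i ω‖ - m) ^ 2
        = ‖∑ i, x i ω‖ ^ 2 - (2 * m) * ‖∑ i, x i ω‖ + m ^ 2 := fun ω => by ring
    simp_rw [hptw]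
    have h1 : Integrable (fun ω => ‖∑ i, x i ω‖ ^ 2 - 2 * m * ‖∑ i, x i ω‖) μ :=
      hsqint.sub (hnormint.const_mul _)
    have h3 : Integrable (fun ω => 2 * m * ‖∑ i, x i ω‖) μ := hnormint.const_mul _
    rw [integral_add h1 (integrable_const _), integral_sub hsqint h3, integral_const_mul]
    simp only [integral_const, measure_univ, ENNReal.toReal_one, probReal_univ, one_smul, ← hm]
    ring
  have hmsq : m ^ 2 ≤ (n:ℝ) * d := by
    rw [hexp] at hvar
    linarith
  exact (Real.le_sqrt hm0 (by positivity)).mpr hmsq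

/-- Vector Bernstein inequality (specialized to variance proxy `σ² = d`): for independent
mean-zero random vectors `x i` in `ℝ^d` with `‖x i‖₂ ≤ √d` a.s., the average
`z = (1/n) ∑ x i` satisfies `Pr{‖z‖₂ ≥ ε} ≤ exp(-n ε²/(8d) + 1/4)` for `0 < ε < √d`. -/
theorem vector_bernstein
    {Ω : Type*} [MeasurableSpace Ω] (μ : Measure Ω) [IsProbabilityMeasure μ]
    (n d : ℕ) (hn : 0 < n) (hd : 0 < d)
    (x : Fin n → Ω → EuclideanSpace ℝ (Fin d))
    (hmeas : ∀ i, Measurable (x i))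
    (hindep : iIndepFun x μ)
    (hint : ∀ i, Integrable (x i) μ)
    (hmean : ∀ i, ∫ ω, x i ω ∂μ = 0)
    (hbdd : ∀ i, ∀ᵐ ω ∂μ, ‖x i ω‖ ≤ Real.sqrt d)
    (ε : ℝ) (hε0 : 0 < ε) (hεd : ε < Real.sqrt d) :
    μ {ω | ε ≤ ‖(n : ℝ)⁻¹ • ∑ i, x i ω‖}
      ≤ ENNReal.ofReal (Real.exp (-((n : ℝ) * ε ^ 2) / (8 * d) + 1 / 4)) := by
  have hnn : (0:ℝ) < n := by exact_mod_cast hn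
  have hdd : (0:ℝ) < d := by exact_mod_cast hd
  have hsub1 : {ω | ε ≤ ‖(n : ℝ)⁻¹ • ∑ i, x i ω‖}
      ⊆ {ω | (n:ℝ) * ε ≤ ‖∑ i, x i ω‖} := by
    intro ω hω
    simp only [Set.mem_setOf_eq] at hω ⊢
    rw [norm_smul, Real.norm_eq_abs, abs_of_pos (inv_pos.mpr hnn)] at hω
    have := mul_le_mul_of_nonneg_left hω hnn.le
    rwa [← mul_assoc, mul_inv_cancel₀ hnn.ne', one_mul] at this
  by_cases hcase : (n:ℝ) * ε ^ 2 ≤ 2 * d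
  · -- trivial case
    calc μ {ω | ε ≤ ‖(n : ℝ)⁻¹ • ∑ i, x i ω‖} ≤ 1 := prob_le_one
      _ = ENNReal.ofReal 1 := by simp
      _ ≤ ENNReal.ofReal (Real.exp (-((n : ℝ) * ε ^ 2) / (8 * d) + 1 / 4)) := by
          apply ENNReal.ofReal_le_ofReal
          apply Real.one_le_exp
          have h1 : (n:ℝ) * ε ^ 2 / (8 * d) ≤ 1 / 4 := by
            rw [div_le_div_iff₀ (by positivity) (by norm_num)]
            linarith
          rw [neg_div]
          linarith
  · push_neg at hcase
    set a : ℝ := (n:ℝ) * ε with ha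
    set s0 : ℝ := Real.sqrt ((n:ℝ) * d) with hs0
    have hs0sq : s0 ^ 2 = (n:ℝ) * d := Real.sq_sqrt (by positivity)
    have hs0pos : 0 < s0 := Real.sqrt_pos.mpr (by positivity)
    have hapos : 0 < a := by positivity
    have has0 : s0 < a := by
      rw [hs0]
      apply (Real.sqrt_lt' hapos).mpr
      rw [ha]
      nlinarith
    set l : ℝ := (a - s0) / ((n:ℝ) * d) with hldef
    have hl0 : 0 ≤ l := div_nonneg (by linarith) (by positivity)
    have hSmeas : Measurable (fun ω => ∑ i, x i ω) :=
      Finset.measurable_sum _ (fun i _ => hmeas i)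
    have hall : ∀ᵐ ω ∂μ, ∀ i, ‖x i ω‖ ≤ Real.sqrt d := ae_all_iff.mpr hbdd
    have hSbdd : ∀ᵐ ω ∂μ, ‖∑ i, x i ω‖ ≤ n * Real.sqrt d := by
      filter_upwards [hall] with ω hω
      calc ‖∑ i, x i ω‖ ≤ ∑ i, ‖x i ω‖ := norm_sum_le _ _
        _ ≤ ∑ _i : Fin n, Real.sqrt d := Finset.sum_le_sum (fun i _ => hω i)
        _ = n * Real.sqrt d := by simp [Finset.sum_const, nsmul_eq_mul]
    have hcont : Continuous fun ω : EuclideanSpace ℝ (Fin d) => Real.exp (l * ‖ω‖) :=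
      Real.continuous_exp.comp (continuous_const.mul continuous_norm)
    have hfexp : Integrable (fun ω => Real.exp (l * ‖∑ i, x i ω‖)) μ := by
      refine Integrable.mono' (integrable_const (Real.exp (l * (n * Real.sqrt d))))
        ((Real.measurable_exp.comp (hSmeas.norm.const_mul l)).aestronglyMeasurable) ?_
      filter_upwards [hSbdd] with ω hω
      rw [Real.norm_eq_abs, abs_of_pos (Real.exp_pos _)]
      exact Real.exp_le_exp.mpr (mul_le_mul_of_nonneg_left hω hl0)
    -- mgf bound
    have hmgf := mgf_lipschitz_sum μ hd x hmeas hindep hbdd hl0 Finset.univ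
      (fun u => ‖u‖) lipschitzWith_one_norm
    have hmom := exp_norm_sum_le μ x hmeas hindep hint hmean hbdd
    have hcard : ((Finset.univ : Finset (Fin n)).card : ℝ) = n := by simp
    have hEbound : ∫ ω, Real.exp (l * ‖∑ i, x i ω‖) ∂μ
        ≤ Real.exp ((n:ℝ) * (l ^ 2 * d / 2) + l * s0) := by
      refine hmgf.trans (Real.exp_le_exp.mpr ?_)
      rw [hcard]
      have := mul_le_mul_of_nonneg_left hmom hl0
      have hs0' : Real.sqrt ((n:ℝ) * d) = s0 := rfl
      rw [hs0'] at this
      linarith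
    -- Markov
    have hmark := mul_meas_ge_le_integral_of_nonneg
      (Filter.Eventually.of_forall (fun ω => (Real.exp_pos _).le)) hfexp (Real.exp (l * a))
    have hsub2 : {ω | (n:ℝ) * ε ≤ ‖∑ i, x i ω‖}
        ⊆ {ω | Real.exp (l * a) ≤ Real.exp (l * ‖∑ i, x i ω‖)} := by
      intro ω hω
      simp only [Set.mem_setOf_eq] at hω ⊢
      exact Real.exp_le_exp.mpr (mul_le_mul_of_nonneg_left hω hl0)
    have hfin : μ {ω | Real.exp (l * a) ≤ Real.exp (l * ‖∑ i, x i ω‖)} ≠ ⊤ :=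
      measure_ne_top μ _
    have htoReal : (μ {ω | Real.exp (l * a) ≤ Real.exp (l * ‖∑ i, x i ω‖)}).toReal
        ≤ (∫ ω, Real.exp (l * ‖∑ i, x i ω‖) ∂μ) / Real.exp (l * a) := by
      rw [le_div_iff₀ (Real.exp_pos _)]
      calc (μ _).toReal * Real.exp (l * a)
          = Real.exp (l * a) * (μ {ω | Real.exp (l * a) ≤ Real.exp (l * ‖∑ i, x i ω‖)}).toReal := by
            ring
        _ ≤ _ := hmark
    -- arithmetic
    have hLHS : (n:ℝ) * (l ^ 2 * d / 2) + l * s0 - l * a = -((a - s0) ^ 2) / (2 * ((n:ℝ) * d)) := by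
      rw [hldef]
      field_simp
      ring
    have key : a ^ 2 - 2 * ((n:ℝ) * d) ≤ 4 * (a - s0) ^ 2 := by
      nlinarith [sq_nonneg (3 * a - 4 * s0), hs0sq]
    have harith : (n:ℝ) * (l ^ 2 * d / 2) + l * s0 - l * a
        ≤ -((n : ℝ) * ε ^ 2) / (8 * d) + 1 / 4 := by
      rw [hLHS]
      have hnd : (0:ℝ) < (n:ℝ) * d := by positivity
      have step : (a ^ 2 - 2 * ((n:ℝ) * d)) / (8 * ((n:ℝ) * d))
          ≤ (a - s0) ^ 2 / (2 * ((n:ℝ) * d)) := by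
        rw [div_le_div_iff₀ (by positivity : (0:ℝ) < 8 * ((n:ℝ) * d))
          (by positivity : (0:ℝ) < 2 * ((n:ℝ) * d))]
        have hmul := mul_le_mul_of_nonneg_right key
          (by positivity : (0:ℝ) ≤ 2 * ((n:ℝ) * d))
        exact hmul.trans_eq (by ring)
      have e9 : (a ^ 2 - 2 * ((n:ℝ) * d)) / (8 * ((n:ℝ) * d))
          = a ^ 2 / (8 * ((n:ℝ) * d)) - 1 / 4 := by
        field_simp
        ring
      have e10 : ((n : ℝ) * ε ^ 2) / (8 * d) = a ^ 2 / (8 * ((n:ℝ) * d)) := by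
        rw [ha]
        field_simp
      rw [e9] at step
      have e11 : -((a - s0) ^ 2) / (2 * ((n:ℝ) * d)) = -((a - s0) ^ 2 / (2 * ((n:ℝ) * d))) :=
        neg_div _ _
      have e12 : -((n:ℝ) * ε ^ 2) / (8 * d) = -(a ^ 2 / (8 * ((n:ℝ) * d))) := by
        rw [neg_div, e10]
      rw [e11, e12]
      linarith
    calc μ {ω | ε ≤ ‖(n : ℝ)⁻¹ • ∑ i, x i ω‖}
        ≤ μ {ω | Real.exp (l * a) ≤ Real.exp (l * ‖∑ i, x i ω‖)} :=
          measure_mono (hsub1.trans hsub2)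
      _ = ENNReal.ofReal ((μ {ω | Real.exp (l * a) ≤ Real.exp (l * ‖∑ i, x i ω‖)}).toReal) :=
          (ENNReal.ofReal_toReal hfin).symm
      _ ≤ ENNReal.ofReal (Real.exp (-((n : ℝ) * ε ^ 2) / (8 * d) + 1 / 4)) := by
          apply ENNReal.ofReal_le_ofReal
          calc (μ _).toReal ≤ (∫ ω, Real.exp (l * ‖∑ i, x i ω‖) ∂μ) / Real.exp (l * a) :=
                htoReal
            _ ≤ Real.exp ((n:ℝ) * (l ^ 2 * d / 2) + l * s0) / Real.exp (l * a) := by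
                gcongr
            _ = Real.exp ((n:ℝ) * (l ^ 2 * d / 2) + l * s0 - l * a) := by
                rw [Real.exp_sub]
            _ ≤ Real.exp (-((n : ℝ) * ε ^ 2) / (8 * d) + 1 / 4) :=
                Real.exp_le_exp.mpr harith
end
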